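/- Let G be a graph on n vertices and G' be obtained from G by adding, for each pair of vertices u,v of G, an independent set I_{uv} of n new vertices each adjacent exactly to u and v. Then mmfvs(G') ≤ n·C(2α(G),2) + n, where α(G) is the independence number of G. -/

import Mathlib

open SimpleGraph

def IsFVS {V : Type*} (G : SimpleGraph V) (S : Set V) : Prop :=
  (G.induce Sᶜ).IsAcyclic

def IsMinFVS {V : Type*} (G : SimpleGraph V) (S : Set V) : Prop :=
  IsFVS G S ∧ ∀ T : Set V, T ⊂ S → ¬ IsFVS G T

noncomputable def mmfvs {V : Type*} (G : SimpleGraph V) : ℕ :=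
  sSup {k | ∃ S : Set V, IsMinFVS G S ∧ S.ncard = k}

def IsIndep {V : Type*} (G : SimpleGraph V) (S : Set V) : Prop :=
  ∀ a ∈ S, ∀ b ∈ S, ¬ G.Adj a b

/-- The independence number of `G`. -/
noncomputable def alphaNum {V : Type*} (G : SimpleGraph V) : ℕ :=
  sSup {k | ∃ S : Set V, IsIndep G S ∧ S.ncard = k}

/-- `G` together with, for each unordered pair `{u,v}` of distinct vertices,
an independent set of `n` new vertices each adjacent exactly to `u` and `v`. -/
def pairBlowup {V : Type*} (G : SimpleGraph V) (n : ℕ) :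
    SimpleGraph (V ⊕ ({e : Sym2 V // ¬ e.IsDiag} × Fin n)) where
  Adj x y :=
    match x, y with
    | Sum.inl a, Sum.inl b => G.Adj a b
    | Sum.inl a, Sum.inr (e, _) => a ∈ e.1
    | Sum.inr (e, _), Sum.inl a => a ∈ e.1
    | Sum.inr _, Sum.inr _ => False
  symm := ⟨by rintro (a | e) (b | f) h <;> simp_all [SimpleGraph.adj_comm]⟩
  loopless := ⟨by rintro (a | e) <;> simp⟩


section pull
variable {V : Type*} {G : SimpleGraph V} {s : Set V}

def pullWalk : ∀ {a b : V} (p : G.Walk a b) (ha : a ∈ s) (hb : b ∈ s)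
    (_ : ∀ x ∈ p.support, x ∈ s), (G.induce s).Walk ⟨a, ha⟩ ⟨b, hb⟩
  | _, _, Walk.nil, _, _, _ => Walk.nil
  | _, _, Walk.cons h q, ha, hb, hp =>
      Walk.cons (by exact h)
        (pullWalk q (hp _ (by simp)) hb (fun x hx => hp x (by simp [hx])))

def inducedVal (G : SimpleGraph V) (s : Set V) : G.induce s →g G :=
  ⟨Subtype.val, fun {a b} h => h⟩

lemma pullWalk_map : ∀ {a b : V} (p : G.Walk a b) (ha : a ∈ s) (hb : b ∈ s)
    (hp : ∀ x ∈ p.support, x ∈ s),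
    Walk.map (inducedVal G s) (pullWalk p ha hb hp) = p
  | _, _, Walk.nil, _, _, _ => rfl
  | _, _, Walk.cons h q, ha, hb, hp => by
      simp only [pullWalk, Walk.map_cons]
      congr 1
      exact congrArg (Walk.cons h) (pullWalk_map q _ _ _)

lemma cycle_of_support {a : V} (c : G.Walk a a) (hc : c.IsCycle)
    (hs : ∀ x ∈ c.support, x ∈ s) :
    ∃ (b : s) (d : (G.induce s).Walk b b), d.IsCycle := by
  have ha := hs a c.start_mem_support
  refine ⟨⟨a, ha⟩, pullWalk c ha ha hs, ?_⟩
  rw [← Walk.map_isCycle_iff_of_injective (f := inducedVal G s) Subtype.val_injective,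
    pullWalk_map]
  exact hc

end pull

lemma exists_two_neighbors {W : Type*} {H : SimpleGraph W} {w : W} {c : H.Walk w w}
    (hc : c.IsCycle) : ∃ y z, y ≠ z ∧ H.Adj w y ∧ H.Adj w z := by
  cases c with
  | nil => exact absurd rfl hc.ne_nil
  | @cons _ y _ h q =>
    have hq : q.IsPath := ((Walk.cons_isCycle_iff _ _).mp hc).1
    have hlen : 3 ≤ q.length + 1 := by
      simpa using hc.three_le_length
    cases hqr : q.reverse with
    | nil =>
      have h0 : q.length = 0 := by simpa using congrArg Walk.length hqr
      omega
    | @cons _ z _ h2 q2 =>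
      refine ⟨y, z, ?_, h, h2⟩
      rintro rfl
      have hq2 : q2.IsPath := ((Walk.cons_isPath_iff _ _).mp (hqr ▸ hq.reverse)).1
      have : q2 = Walk.nil := by
        have := SimpleGraph.Path.loop_eq ⟨q2, hq2⟩
        exact congrArg Subtype.val this
      have : q.reverse.length = 1 := by rw [hqr, this]; simp
      rw [Walk.length_reverse] at this
      omega

lemma exists_leaf {W : Type*} [Fintype W] [Nonempty W] {H : SimpleGraph W}
    (h : H.IsAcyclic) : ∃ a : W, ∀ b c, H.Adj a b → H.Adj a c → b = c := by
  classical
  set L : Set ℕ := {k | ∃ (x y : W) (p : H.Walk x y), p.IsPath ∧ p.length = k} with hL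
  have hne : L.Nonempty := ⟨0, Classical.arbitrary W, Classical.arbitrary W,
    Walk.nil, Walk.IsPath.nil, rfl⟩
  have hbdd : BddAbove L := by
    refine ⟨Fintype.card W, ?_⟩
    rintro k ⟨x, y, p, hp, rfl⟩
    exact hp.length_lt.le
  obtain ⟨x, y, p, hp, hplen⟩ := Nat.sSup_mem hne hbdd
  refine ⟨x, ?_⟩
  have key : ∀ d, H.Adj x d → d = p.getVert 1 := by
    intro d hd
    by_cases hmem : d ∈ p.support
    · have hq : (p.takeUntil d hmem).IsPath := hp.takeUntil hmem
      have hr : (Walk.cons hd Walk.nil).IsPath := by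
        rw [Walk.cons_isPath_iff]
        simp [hd.ne]
      have := h.path_unique ⟨p.takeUntil d hmem, hq⟩ ⟨Walk.cons hd Walk.nil, hr⟩
      have heq : p.takeUntil d hmem = Walk.cons hd Walk.nil := congrArg Subtype.val this
      have hspec := Walk.take_spec p hmem
      rw [heq] at hspec
      calc d = (Walk.cons hd ((Walk.nil : H.Walk d d).append (p.dropUntil d hmem))).getVert 1 := by
              simp [Walk.getVert_cons]
        _ = p.getVert 1 := by rw [← Walk.cons_append, hspec]
    · exfalso
      have hq : (Walk.cons hd.symm p).IsPath := by
        rw [Walk.cons_isPath_iff]; exact ⟨hp, hmem⟩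
      have : (Walk.cons hd.symm p).length ∈ L := ⟨_, _, _, hq, rfl⟩
      have hle := le_csSup hbdd this
      simp only [Walk.length_cons, hplen] at hle
      omega
  intro b c hb hc
  rw [key b hb, key c hc]

lemma isAcyclic_induce_mono {V : Type*} {G : SimpleGraph V} {s t : Set V} (hst : s ⊆ t)
    (h : (G.induce t).IsAcyclic) : (G.induce s).IsAcyclic := by
  intro v c hc
  exact h _ ((hc.map (SimpleGraph.induceHomOfLE G hst).injective
    (f := (SimpleGraph.induceHomOfLE G hst).toHom)))

lemma two_color {V : Type*} [Fintype V] (G : SimpleGraph V) :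
    ∀ (n : ℕ) (s : Set V), s.ncard ≤ n → (G.induce s).IsAcyclic →
      ∃ f : V → Bool, ∀ a ∈ s, ∀ b ∈ s, G.Adj a b → f a ≠ f b := by
  classical
  intro n
  induction n with
  | zero =>
    intro s hs _
    have : s = ∅ := by
      rw [← Set.ncard_eq_zero s.toFinite]; omega
    subst this
    exact ⟨fun _ => true, by simp⟩
  | succ n ih =>
    intro s hs hac
    rcases Set.eq_empty_or_nonempty s with rfl | hne
    · exact ⟨fun _ => true, by simp⟩
    · haveI : Nonempty s := hne.to_subtype
      obtain ⟨a, ha⟩ := exists_leaf hac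
      set s' : Set V := s \ {(a : V)} with hs'
      have hcard : s'.ncard ≤ n := by
        have := Set.ncard_diff_singleton_lt_of_mem a.2 s.toFinite
        have h2 : s'.ncard = s.ncard - 1 := Set.ncard_diff_singleton_of_mem a.2
        omega
      obtain ⟨f, hf⟩ := ih s' hcard (isAcyclic_induce_mono Set.diff_subset hac)
      classical
      set col : Bool := if h3 : ∃ b ∈ s', G.Adj (a : V) b then !f h3.choose else true with hcol
      refine ⟨fun x => if x = (a : V) then col else f x, ?_⟩
      have key : ∀ y ∈ s', G.Adj (a : V) y → col = !f y := by
        intro y hy hadjy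
        have h3 : ∃ b ∈ s', G.Adj (a : V) b := ⟨y, hy, hadjy⟩
        have hspec := h3.choose_spec
        have : (⟨h3.choose, Set.diff_subset hspec.1⟩ : s) = ⟨y, Set.diff_subset hy⟩ := by
          have := ha ⟨h3.choose, Set.diff_subset hspec.1⟩ ⟨y, Set.diff_subset hy⟩
            (by exact hspec.2) (by exact hadjy)
          exact this
        rw [hcol, dif_pos h3]
        congr 1
        exact congrArg f (by simpa using congrArg Subtype.val this)
      intro x hx y hy hadj
      by_cases hxa : x = (a : V) <;> by_cases hya : y = (a : V)
      · subst hxa; exact absurd (hya ▸ hadj) (G.irrefl)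
      · subst hxa
        have hy' : y ∈ s' := ⟨hy, hya⟩
        simp only [if_pos rfl, if_neg hya]
        rw [key y hy' hadj]
        simp
      · subst hya
        have hx' : x ∈ s' := ⟨hx, hxa⟩
        simp only [if_pos rfl, if_neg hxa]
        rw [key x hx' hadj.symm]
        simp
      · simp only [if_neg hxa, if_neg hya]
        exact hf x ⟨hx, hxa⟩ y ⟨hy, hya⟩ hadj

lemma ncard_le_two_alpha {V : Type*} [Fintype V] (G : SimpleGraph V) (s : Set V)
    (h : (G.induce s).IsAcyclic) : s.ncard ≤ 2 * alphaNum G := by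
  classical
  obtain ⟨f, hf⟩ := two_color G s.ncard s le_rfl h
  have hbdd : BddAbove {k | ∃ S : Set V, IsIndep G S ∧ S.ncard = k} := by
    refine ⟨Fintype.card V, ?_⟩
    rintro k ⟨S, _, rfl⟩
    calc S.ncard ≤ (Set.univ : Set V).ncard :=
          Set.ncard_le_ncard (Set.subset_univ _) Set.finite_univ
      _ = Fintype.card V := by rw [Set.ncard_univ, Nat.card_eq_fintype_card]
  have hind : ∀ b : Bool, IsIndep G (s ∩ f ⁻¹' {b}) := by
    intro b u hu v hv hadj
    exact hf u hu.1 v hv.1 hadj (by rw [hu.2, hv.2])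
  have hle : ∀ b : Bool, (s ∩ f ⁻¹' {b}).ncard ≤ alphaNum G := by
    intro b
    exact le_csSup hbdd ⟨_, hind b, rfl⟩
  have hunion : s = (s ∩ f ⁻¹' {true}) ∪ (s ∩ f ⁻¹' {false}) := by
    ext x
    simp only [Set.mem_union, Set.mem_inter_iff, Set.mem_preimage, Set.mem_singleton_iff]
    cases hfx : f x <;> tauto
  calc s.ncard = ((s ∩ f ⁻¹' {true}) ∪ (s ∩ f ⁻¹' {false})).ncard := by rw [← hunion]
    _ ≤ (s ∩ f ⁻¹' {true}).ncard + (s ∩ f ⁻¹' {false}).ncard := Set.ncard_union_le _ _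
    _ ≤ alphaNum G + alphaNum G := Nat.add_le_add (hle true) (hle false)
    _ = 2 * alphaNum G := by omega

abbrev BlowV (V : Type*) (n : ℕ) : Type _ := V ⊕ ({e : Sym2 V // ¬ e.IsDiag} × Fin n)

section main
variable {V : Type*} [Fintype V] {G : SimpleGraph V} {n : ℕ}

local notation "W" => BlowV V n



lemma keyB {S : Set W} (hFVS : IsFVS (pairBlowup G n) S)
    (hmin : ∀ T : Set W, T ⊂ S → ¬ IsFVS (pairBlowup G n) T)
    (e : {e : Sym2 V // ¬ e.IsDiag}) (i : Fin n) (hmem : Sum.inr (e, i) ∈ S) :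
    ∀ v ∈ e.1, Sum.inl v ∉ S := by
  classical
  set G' := pairBlowup G n with hG'
  have hT : ¬ IsFVS G' (S \ {Sum.inr (e, i)}) :=
    hmin _ (Set.sdiff_singleton_ssubset.mpr hmem)
  simp only [IsFVS, IsAcyclic, not_forall, not_not] at hT
  obtain ⟨a, c, hc⟩ := hT
  have hwT : (Sum.inr (e, i) : W) ∈ (S \ {Sum.inr (e, i)})ᶜ := by simp
  have hSc : ∀ x : ((S \ {Sum.inr (e, i)})ᶜ : Set W),
      (x : W) ≠ Sum.inr (e, i) → (x : W) ∉ S := by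
    intro x hx hxS
    have h2 := x.2
    simp only [Set.mem_compl_iff, Set.mem_diff, Set.mem_singleton_iff, not_and, not_not] at h2
    exact hx (h2 hxS)
  by_cases hws : (⟨Sum.inr (e, i), hwT⟩ : ((S \ {Sum.inr (e, i)})ᶜ : Set W)) ∈ c.support
  · have hrot := hc.rotate hws
    obtain ⟨y, z, hyz, hadjy, hadjz⟩ := exists_two_neighbors hrot
    have extract : ∀ x : ((S \ {Sum.inr (e, i)})ᶜ : Set W),
        (G'.induce (S \ {Sum.inr (e, i)})ᶜ).Adj ⟨Sum.inr (e, i), hwT⟩ x →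
        ∃ u, (x : W) = Sum.inl u ∧ u ∈ e.1 ∧ Sum.inl u ∉ S := by
      intro x hadj
      have hadj' : G'.Adj (Sum.inr (e, i)) (x : W) := hadj
      have hxw : (x : W) ≠ Sum.inr (e, i) := hadj'.ne'
      have hxS : (x : W) ∉ S := hSc x hxw
      rcases hx : (x : W) with u | p
      · rw [hx] at hadj' hxS
        exact ⟨u, rfl, hadj', hxS⟩
      · rw [hx] at hadj'
        exact hadj'.elim
    obtain ⟨u₁, hy1, hu1e, hu1F⟩ := extract y hadjy
    obtain ⟨u₂, hz1, hu2e, hu2F⟩ := extract z hadjz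
    have huu : u₁ ≠ u₂ := by
      rintro rfl
      exact hyz (Subtype.val_injective (hy1.trans hz1.symm))
    have hee : e.1 = s(u₁, u₂) := (Sym2.mem_and_mem_iff huu).mp ⟨hu1e, hu2e⟩
    intro v hv
    rw [hee, Sym2.mem_iff] at hv
    rcases hv with rfl | rfl
    · exact hu1F
    · exact hu2F
  · have hsupp : ∀ x ∈ c.support,
        x ∈ {x : ((S \ {Sum.inr (e, i)})ᶜ : Set W) | (x : W) ∉ S} := by
      intro x hx
      refine hSc x ?_
      intro hxw
      apply hws
      have hxeq : x = ⟨Sum.inr (e, i), hwT⟩ := Subtype.ext hxw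
      rwa [hxeq] at hx
    obtain ⟨b, d, hd⟩ := cycle_of_support c hc hsupp
    exfalso
    let ψ : (G'.induce (S \ {Sum.inr (e, i)})ᶜ).induce
        {x : ((S \ {Sum.inr (e, i)})ᶜ : Set W) | (x : W) ∉ S} →g G'.induce Sᶜ :=
      ⟨fun x => ⟨((x : _) : W), x.2⟩, fun {a b} h => h⟩
    have hψ : Function.Injective ψ := by
      intro a b hab
      apply Subtype.ext
      apply Subtype.ext
      exact congrArg (fun t : (Sᶜ : Set (BlowV V n)) => (t : BlowV V n)) hab
    have := hd.map (f := ψ) hψ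
    exact hFVS _ this

lemma mainBound {S : Set W} (hS : IsMinFVS (pairBlowup G n) S) :
    S.ncard ≤ (2 * alphaNum G).choose 2 * n + Fintype.card V := by
  classical
  obtain ⟨hFVS, hmin⟩ := hS
  set G' := pairBlowup G n with hG'
  set F : Set V := {v | Sum.inl v ∉ S} with hF
  -- (A) induced graph on F is acyclic
  have hFac : (G.induce F).IsAcyclic := by
    intro v c hc
    let φ : G.induce F →g G'.induce Sᶜ :=
      ⟨fun x => ⟨Sum.inl x.1, x.2⟩, fun {a b} h => h⟩
    have hφ : Function.Injective φ := by
      intro a b hab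
      have : (Sum.inl (a : V) : W) = Sum.inl (b : V) := congrArg Subtype.val hab
      exact Subtype.ext (Sum.inl_injective this)
    have := hc.map (f := φ) hφ
    exact hFVS _ this
  have hB := keyB hFVS hmin
  -- counting
  set S₁ : Set V := Sum.inl ⁻¹' S with hS₁
  set S₂ : Set ({e : Sym2 V // ¬ e.IsDiag} × Fin n) := Sum.inr ⁻¹' S with hS₂
  have hsplit : S = Sum.inl '' S₁ ∪ Sum.inr '' S₂ := by
    ext x; cases x <;> simp [hS₁, hS₂]
  have hdisj : Disjoint (Sum.inl '' S₁) (Sum.inr '' S₂) := by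
    rw [Set.disjoint_left]
    rintro x ⟨a, _, rfl⟩ ⟨b, _, h⟩
    simp at h
  have hcard : S.ncard = S₁.ncard + S₂.ncard := by
    rw [hsplit, Set.ncard_union_eq hdisj (Set.toFinite _) (Set.toFinite _),
      Set.ncard_image_of_injective _ Sum.inl_injective,
      Set.ncard_image_of_injective _ Sum.inr_injective]
  have h1 : S₁.ncard ≤ Fintype.card V := by
    calc S₁.ncard ≤ (Set.univ : Set V).ncard :=
          Set.ncard_le_ncard (Set.subset_univ _) Set.finite_univ
      _ = Fintype.card V := by rw [Set.ncard_univ, Nat.card_eq_fintype_card]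
  set P : Set {e : Sym2 V // ¬ e.IsDiag} := {e | ∀ v ∈ e.1, v ∈ F} with hP
  have hS₂P : S₂ ⊆ P ×ˢ (Set.univ : Set (Fin n)) := by
    rintro ⟨e, i⟩ hmem
    exact ⟨fun v hv => hB e i hmem v hv, trivial⟩
  have hprodcard : (P ×ˢ (Set.univ : Set (Fin n))).ncard = P.ncard * n := by
    rw [← Nat.card_coe_set_eq, ← Nat.card_coe_set_eq,
      Nat.card_congr (Equiv.Set.prod _ _), Nat.card_prod]
    congr 1
    rw [Nat.card_congr (Equiv.Set.univ _), Nat.card_eq_fintype_card, Fintype.card_fin]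
  have h2 : S₂.ncard ≤ P.ncard * n := by
    rw [← hprodcard]
    exact Set.ncard_le_ncard hS₂P (Set.toFinite _)
  haveI : Fintype F := F.toFinite.fintype
  have hPcard : P.ncard ≤ (F.ncard).choose 2 := by
    let φ : P → {z : Sym2 F // ¬ z.IsDiag} := fun e =>
      ⟨(e.1.1).attachWith e.2, by
        intro hd
        apply e.1.2
        rwa [← Sym2.attachWith_map_subtypeVal (s := e.1.1) e.2,
          Sym2.isDiag_map Subtype.val_injective]⟩
    have hφ : Function.Injective φ := by
      intro a b hab
      have h1 : (a.1.1).attachWith a.2 = (b.1.1).attachWith b.2 := congrArg Subtype.val hab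
      have h2 : a.1.1 = b.1.1 := by
        rw [← Sym2.attachWith_map_subtypeVal (s := a.1.1) a.2,
          ← Sym2.attachWith_map_subtypeVal (s := b.1.1) b.2, h1]
      exact Subtype.ext (Subtype.ext h2)
    calc P.ncard = Nat.card P := (Nat.card_coe_set_eq _).symm
      _ ≤ Nat.card {z : Sym2 F // ¬ z.IsDiag} := Nat.card_le_card_of_injective φ hφ
      _ = (Fintype.card F).choose 2 := by
          rw [Nat.card_eq_fintype_card]; exact Sym2.card_subtype_not_diag
      _ = (F.ncard).choose 2 := by
          congr 1
          rw [Set.ncard_eq_toFinset_card', Set.toFinset_card]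
  have hFle : F.ncard ≤ 2 * alphaNum G := ncard_le_two_alpha G F hFac
  have hPle : P.ncard ≤ (2 * alphaNum G).choose 2 :=
    hPcard.trans (Nat.choose_le_choose 2 hFle)
  have hmul : P.ncard * n ≤ (2 * alphaNum G).choose 2 * n :=
    Nat.mul_le_mul_right n hPle
  omega

end main

theorem mmfvs_pairBlowup_upper_bound {V : Type*} [Fintype V] (G : SimpleGraph V) :
    mmfvs (pairBlowup G (Fintype.card V)) ≤
      Fintype.card V * (2 * alphaNum G).choose 2 + Fintype.card V := by
  apply csSup_le'
  rintro k ⟨S, hS, rfl⟩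
  have := mainBound hS
  have hcomm : (2 * alphaNum G).choose 2 * Fintype.card V
      = Fintype.card V * (2 * alphaNum G).choose 2 := Nat.mul_comm _ _
  omega
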